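/- Let $q\ge 1$ be an integer and define $u_{1,q}=q$ and $u_{p+1,q}=u_{p,q}(1+u_{p,q})$. Then for all $p\ge 1$, $\prod_{i=1}^p \frac{1}{1+u_{i,q}} = 1 - q\sum_{i=1}^p \frac{1}{1+u_{i,q}}$ (as rational numbers). -/

import Mathlib

theorem stmt_5 (q : ℕ) (hq : 1 ≤ q) (u : ℕ → ℕ)
    (hu1 : u 1 = q) (hurec : ∀ p ≥ 1, u (p + 1) = u p * (1 + u p)) :
    ∀ p ≥ 1, ∏ i ∈ Finset.Icc 1 p, (1 : ℚ) / (1 + u i)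
      = 1 - q * ∑ i ∈ Finset.Icc 1 p, (1 : ℚ) / (1 + u i) := by
  have hne : ∀ i, (1 + (u i : ℚ)) ≠ 0 := by
    intro i; positivity
  have key : ∀ p ≥ 1, (u (p + 1) : ℚ) * ∏ i ∈ Finset.Icc 1 p, (1 : ℚ) / (1 + u i) = q := by
    intro p hp
    induction p, hp using Nat.le_induction with
    | base =>
      simp only [Finset.Icc_self, Finset.prod_singleton, hurec 1 le_rfl, hu1]
      push_cast
      field_simp
    | succ n hn ih =>
      rw [Finset.prod_Icc_succ_top (by omega), hurec (n+1) (by omega)]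
      push_cast
      have h := hne (n + 1)
      field_simp at ih ⊢
      linear_combination ih
  intro p hp
  induction p, hp using Nat.le_induction with
  | base =>
    simp only [Finset.Icc_self, Finset.prod_singleton, Finset.sum_singleton, hu1]
    field_simp
    ring
  | succ n hn ih =>
    rw [Finset.prod_Icc_succ_top (by omega), Finset.sum_Icc_succ_top (by omega), ih,
      mul_add, sub_add_eq_sub_sub]
    have hk := key n hn
    have h := hne (n + 1)
    have hu : (u (n + 1) : ℚ) = (1 + u (n + 1)) - 1 := by ring
    field_simp
    linear_combination ((u (n+1) : ℚ)) * ih - hk
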